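/- Let k ≥ 2, let 0 ≤ ε < 1/2, and let P_0, P_1, …, P_k be probability distributions on a finite set such that d_TV(P_i, P_{i'}) ≥ 1 − 2ε for all distinct i, i' ∈ {1,…,k}. Then there exists a subset S ⊆ {1,…,k} with |S| = k − 1 such that H²(P_0, P_i) ≥ (1−2ε)²/8 for every i ∈ S. In particular, ∑_{i=1}^k H²(P_0, P_i) ≥ (k−1)·(1−2ε)²/8. -/

import Mathlib

open Finset

noncomputable section

/-- `p` is a probability distribution on the finite set `Ω`. -/
def IsDist {Ω : Type*} [Fintype Ω] (p : Ω → ℝ) : Prop :=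
  (∀ x, 0 ≤ p x) ∧ ∑ x, p x = 1

/-- Squared Hellinger distance between two distributions on a finite set. -/
def hellSq {Ω : Type*} [Fintype Ω] (p q : Ω → ℝ) : ℝ :=
  (1/2) * ∑ x, (Real.sqrt (p x) - Real.sqrt (q x))^2

/-- Total variation distance between two distributions on a finite set. -/
def tvDist {Ω : Type*} [Fintype Ω] (p q : Ω → ℝ) : ℝ :=
  (1/2) * ∑ x, |p x - q x|

lemma hellSq_nonneg {Ω : Type*} [Fintype Ω] (p q : Ω → ℝ) : 0 ≤ hellSq p q := by
  unfold hellSq; positivity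

lemma tvDist_nonneg {Ω : Type*} [Fintype Ω] (p q : Ω → ℝ) : 0 ≤ tvDist p q := by
  unfold tvDist; positivity

lemma tvDist_triangle' {Ω : Type*} [Fintype Ω] (p q r : Ω → ℝ) :
    tvDist p r ≤ tvDist p q + tvDist q r := by
  unfold tvDist
  rw [← mul_add, ← Finset.sum_add_distrib]
  have h : ∑ x, |p x - r x| ≤ ∑ x, (|p x - q x| + |q x - r x|) :=
    Finset.sum_le_sum fun x _ => abs_sub_le _ _ _
  linarith

lemma tvDist_comm {Ω : Type*} [Fintype Ω] (p q : Ω → ℝ) : tvDist p q = tvDist q p := by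
  unfold tvDist
  congr 1
  exact Finset.sum_congr rfl fun x _ => abs_sub_comm _ _

lemma tv_sq_le {Ω : Type*} [Fintype Ω] (p q : Ω → ℝ)
    (hp : IsDist p) (hq : IsDist q) : (tvDist p q)^2 ≤ 2 * hellSq p q := by
  set a : Ω → ℝ := fun x => Real.sqrt (p x) with ha'
  set b : Ω → ℝ := fun x => Real.sqrt (q x) with hb'
  have ha : ∀ x, 0 ≤ a x := fun x => Real.sqrt_nonneg _
  have hb : ∀ x, 0 ≤ b x := fun x => Real.sqrt_nonneg _
  have hpa : ∀ x, a x ^ 2 = p x := fun x => Real.sq_sqrt (hp.1 x)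
  have hqb : ∀ x, b x ^ 2 = q x := fun x => Real.sq_sqrt (hq.1 x)
  have habs : ∀ x, |p x - q x| = |a x - b x| * (a x + b x) := by
    intro x
    rw [← hpa x, ← hqb x, sq_sub_sq, abs_mul,
      abs_of_nonneg (by positivity : (0:ℝ) ≤ a x + b x)]
    ring
  have hCS : (∑ x, |a x - b x| * (a x + b x))^2 ≤
      (∑ x, (a x - b x)^2) * (∑ x, (a x + b x)^2) := by
    have := Finset.sum_mul_sq_le_sq_mul_sq Finset.univ
      (fun x => |a x - b x|) (fun x => a x + b x)
    simpa [sq_abs] using this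
  have hab : (∑ x, a x * b x) ≤ 1 := by
    have h1 : (∑ x, a x * b x)^2 ≤ (∑ x, a x ^2) * (∑ x, b x^2) :=
      Finset.sum_mul_sq_le_sq_mul_sq Finset.univ a b
    have h2 : (∑ x, a x ^ 2) = 1 := by
      rw [Finset.sum_congr rfl fun x _ => hpa x]; exact hp.2
    have h3 : (∑ x, b x ^ 2) = 1 := by
      rw [Finset.sum_congr rfl fun x _ => hqb x]; exact hq.2
    have h4 : 0 ≤ ∑ x, a x * b x :=
      Finset.sum_nonneg fun x _ => mul_nonneg (ha x) (hb x)
    nlinarith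
  have hsum2 : (∑ x, (a x + b x)^2) ≤ 4 := by
    have heq : ∀ x, (a x + b x)^2 = p x + q x + 2*(a x * b x) := by
      intro x; rw [← hpa x, ← hqb x]; ring
    rw [Finset.sum_congr rfl fun x _ => heq x, Finset.sum_add_distrib,
      Finset.sum_add_distrib, ← Finset.mul_sum, hp.2, hq.2]
    linarith
  have hh : (∑ x, (a x - b x)^2) = 2 * hellSq p q := by
    unfold hellSq; rw [ha', hb']; ring
  have htv : tvDist p q = (1/2) * ∑ x, |a x - b x| * (a x + b x) := by
    unfold tvDist
    congr 1
    exact Finset.sum_congr rfl fun x _ => habs x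
  have hhn : 0 ≤ hellSq p q := hellSq_nonneg p q
  rw [htv]
  nlinarith [hCS, hsum2, hh, hhn,
    Finset.sum_nonneg (fun x (_ : x ∈ Finset.univ) => sq_nonneg (a x - b x))]

/-- if `P_1, …, P_k` are pairwise far apart in total variation
(`d_TV ≥ 1 − 2ε`), then all but at most one of them are Hellinger-far from `P_0`. -/
theorem statement11 (k : ℕ) (hk : 2 ≤ k) (ε : ℝ) (hε0 : 0 ≤ ε) (hε : ε < 1/2)
    (β : Type) [Fintype β] (P₀ : β → ℝ) (P : Fin k → β → ℝ)
    (hP₀ : IsDist P₀) (hP : ∀ i, IsDist (P i))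
    (hTV : ∀ i i' : Fin k, i ≠ i' → 1 - 2*ε ≤ tvDist (P i) (P i')) :
    (∃ S : Finset (Fin k), S.card = k - 1 ∧
      ∀ i ∈ S, (1 - 2*ε)^2 / 8 ≤ hellSq P₀ (P i)) ∧
    ((k : ℝ) - 1) * (1 - 2*ε)^2 / 8 ≤ ∑ i, hellSq P₀ (P i) := by
  set c : ℝ := (1 - 2*ε)^2 / 8 with hc
  have hpos : 0 < 1 - 2*ε := by linarith
  have key : ∀ i i' : Fin k, i ≠ i' →
      hellSq P₀ (P i) < c → ¬ hellSq P₀ (P i') < c := by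
    intro i i' hne hi hi'
    have h1 := tv_sq_le P₀ (P i) hP₀ (hP i)
    have h2 := tv_sq_le P₀ (P i') hP₀ (hP i')
    have ht1 : tvDist P₀ (P i) < (1-2*ε)/2 := by
      have := tvDist_nonneg P₀ (P i); nlinarith
    have ht2 : tvDist P₀ (P i') < (1-2*ε)/2 := by
      have := tvDist_nonneg P₀ (P i'); nlinarith
    have htri : tvDist (P i) (P i') ≤ tvDist (P i) P₀ + tvDist P₀ (P i') :=
      tvDist_triangle' _ _ _
    rw [tvDist_comm (P i) P₀] at htri
    have := hTV i i' hne
    linarith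
  set B : Finset (Fin k) := Finset.univ.filter (fun i => hellSq P₀ (P i) < c) with hB
  have hBcard : B.card ≤ 1 := by
    rw [Finset.card_le_one]
    intro i hi j hj
    by_contra hne
    exact key i j hne (by simpa [hB] using hi) (by simpa [hB] using hj)
  have hcompl : k - 1 ≤ Bᶜ.card := by
    have h := Finset.card_compl B
    simp only [Fintype.card_fin] at h
    omega
  obtain ⟨S, hSsub, hScard⟩ := Finset.exists_subset_card_eq (s := Bᶜ) (n := k-1) hcompl
  have hS : ∀ i ∈ S, c ≤ hellSq P₀ (P i) := by
    intro i hi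
    have h := hSsub hi
    simp only [hB, Finset.mem_compl, Finset.mem_filter, Finset.mem_univ,
      true_and] at h
    exact not_lt.mp h
  refine ⟨⟨S, hScard, fun i hi => hS i hi⟩, ?_⟩
  have h1 : ∑ i ∈ S, hellSq P₀ (P i) ≤ ∑ i, hellSq P₀ (P i) :=
    Finset.sum_le_sum_of_subset_of_nonneg (Finset.subset_univ S)
      (fun i _ _ => hellSq_nonneg _ _)
  have h2 : (S.card : ℝ) * c ≤ ∑ i ∈ S, hellSq P₀ (P i) := by
    calc (S.card : ℝ) * c = ∑ _i ∈ S, c := by rw [Finset.sum_const, nsmul_eq_mul]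
    _ ≤ _ := Finset.sum_le_sum hS
  have hcast : (S.card : ℝ) = (k : ℝ) - 1 := by
    rw [hScard]
    have h1' : (1:ℕ) ≤ k := by omega
    push_cast [Nat.cast_sub h1']
    ring
  rw [hcast] at h2
  have heq : ((k:ℝ)-1) * (1 - 2*ε)^2 / 8 = ((k:ℝ)-1) * c := by rw [hc]; ring
  rw [heq]
  linarith
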